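/- The number of linear extensions of a finite poset is a comparability invariant: if two posets P and Q on the same finite ground set have isomorphic comparability graphs, then e(P) = e(Q). -/

import Mathlib

/-
We prove that the number of linear extensions is a comparability invariant,
following a discrete version of Stanley's transfer map between the order
polytope and the chain polytope.

Outline:
* `Wcard P m` counts weakly order-preserving maps `V → Fin m`.
* `Kcard P m` counts maps `g : V → ℕ` whose sum over every chain is `≤ m`;
  this only depends on the comparability relation (chains = cliques).
* The transfer map `φ f v = f v - max_{u < v} f u` with inverse
  `ψ g v = max over chains with top v of the sum of g` gives
  `Wcard P (m+1) = Kcard P m`.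
* Counting by images, `Wcard P m = ∑_{S ⊆ Fin m} Tcard P |S|` where `Tcard`
  counts weakly order-preserving surjections; by strong induction `Tcard` is
  determined by `Wcard`, and `Tcard P (card V) = eCount V P`.
-/

open Classical

/-- The number of linear extensions of a partial order `P` on a finite type `V`. -/
noncomputable def eCount (V : Type*) [Fintype V] (P : PartialOrder V) : ℕ :=
  Nat.card {f : V ≃ Fin (Fintype.card V) // ∀ a b, P.lt a b → f a < f b}

section Invariance

variable {V : Type*} [Fintype V]

/-- `S` is a chain for `P`: all elements pairwise comparable. -/
def pChain (P : PartialOrder V) (S : Finset V) : Prop :=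
  ∀ a ∈ S, ∀ b ∈ S, P.le a b ∨ P.le b a

lemma plt_of_ple_ne (P : PartialOrder V) {a b : V} (h : P.le a b) (hne : a ≠ b) :
    P.lt a b := by
  rw [P.lt_iff_le_not_ge]
  exact ⟨h, fun h' => hne (P.le_antisymm a b h h')⟩

lemma ple_of_plt (P : PartialOrder V) {a b : V} (h : P.lt a b) : P.le a b := by
  rw [P.lt_iff_le_not_ge] at h; exact h.1

lemma pne_of_plt (P : PartialOrder V) {a b : V} (h : P.lt a b) : a ≠ b := by
  rintro rfl
  rw [P.lt_iff_le_not_ge] at h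
  exact h.2 h.1

lemma pChain_subset (P : PartialOrder V) {S T : Finset V} (h : T ⊆ S)
    (hc : pChain P S) : pChain P T := fun a ha b hb => hc a (h ha) b (h hb)

lemma pChain_insert (P : PartialOrder V) {S : Finset V} {b : V} (hc : pChain P S)
    (hbd : ∀ u ∈ S, P.le u b) : pChain P (insert b S) := by
  intro x hx y hy
  rcases Finset.mem_insert.1 hx with rfl | hx2
  · rcases Finset.mem_insert.1 hy with rfl | hy2
    · exact Or.inl (P.le_refl _)
    · exact Or.inr (hbd y hy2)
  · rcases Finset.mem_insert.1 hy with rfl | hy2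
    · exact Or.inl (hbd x hx2)
    · exact hc x hx2 y hy2

lemma chain_exists_max (P : PartialOrder V) :
    ∀ S : Finset V, pChain P S → S.Nonempty → ∃ v ∈ S, ∀ u ∈ S, P.le u v := by
  intro S
  induction S using Finset.induction_on with
  | empty => intro _ h; exact absurd h (by simp)
  | @insert a s ha ih =>
    intro hc _
    rcases s.eq_empty_or_nonempty with rfl | hs
    · refine ⟨a, Finset.mem_insert_self a ∅, ?_⟩
      intro u hu
      have hua : u = a := by simpa using hu
      subst hua
      exact P.le_refl u
    · have hc' : pChain P s := pChain_subset P (Finset.subset_insert a s) hc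
      obtain ⟨v, hv, hvmax⟩ := ih hc' hs
      rcases hc a (Finset.mem_insert_self a s) v (Finset.mem_insert_of_mem hv) with hav | hva
      · refine ⟨v, Finset.mem_insert_of_mem hv, ?_⟩
        intro u hu
        rcases Finset.mem_insert.1 hu with rfl | hu
        · exact hav
        · exact hvmax u hu
      · refine ⟨a, Finset.mem_insert_self a s, ?_⟩
        intro u hu
        rcases Finset.mem_insert.1 hu with rfl | hu
        · exact P.le_refl u
        · exact P.le_trans _ _ _ (hvmax u hu) hva

/-- Max of `f` over strict predecessors of `v` (0 if none). -/
noncomputable def Mx (P : PartialOrder V) (f : V → ℕ) (v : V) : ℕ :=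
  (Finset.univ.filter (fun u => P.lt u v)).sup f

lemma le_Mx (P : PartialOrder V) (f : V → ℕ) {u v : V} (h : P.lt u v) :
    f u ≤ Mx P f v :=
  Finset.le_sup (by simp [h])

lemma Mx_le (P : PartialOrder V) {f : V → ℕ} (hf : ∀ a b, P.le a b → f a ≤ f b)
    (v : V) : Mx P f v ≤ f v := by
  refine Finset.sup_le ?_
  intro u hu
  rw [Finset.mem_filter] at hu
  exact hf _ _ (ple_of_plt P hu.2)

/-- The transfer map. -/
noncomputable def phi (P : PartialOrder V) (f : V → ℕ) (v : V) : ℕ :=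
  f v - Mx P f v

/-- All chains with top element `v`. -/
noncomputable def chainsTo (P : PartialOrder V) (v : V) : Finset (Finset V) :=
  Finset.univ.filter (fun S => v ∈ S ∧ pChain P S ∧ ∀ u ∈ S, P.le u v)

/-- The inverse transfer map. -/
noncomputable def psi (P : PartialOrder V) (g : V → ℕ) (v : V) : ℕ :=
  (chainsTo P v).sup (fun S => ∑ u ∈ S, g u)

lemma mem_chainsTo_iff (P : PartialOrder V) (v : V) (S : Finset V) :
    S ∈ chainsTo P v ↔ v ∈ S ∧ pChain P S ∧ ∀ u ∈ S, P.le u v := by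
  simp [chainsTo]

lemma singleton_mem_chainsTo (P : PartialOrder V) (v : V) : {v} ∈ chainsTo P v := by
  rw [mem_chainsTo_iff]
  refine ⟨Finset.mem_singleton_self v, ?_, ?_⟩
  · intro a ha b hb
    rw [Finset.mem_singleton] at ha hb
    subst ha; subst hb
    exact Or.inl (P.le_refl _)
  · intro u hu
    rw [Finset.mem_singleton] at hu
    subst hu
    exact P.le_refl u

lemma le_psi_of_mem (P : PartialOrder V) (g : V → ℕ) {v : V} {S : Finset V}
    (h : S ∈ chainsTo P v) : ∑ u ∈ S, g u ≤ psi P g v := by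
  rw [psi]; exact Finset.le_sup (f := fun T => ∑ u ∈ T, g u) h

lemma psi_attained (P : PartialOrder V) (g : V → ℕ) (v : V) :
    ∃ S ∈ chainsTo P v, psi P g v = ∑ u ∈ S, g u := by
  rw [psi]
  exact Finset.exists_mem_eq_sup (chainsTo P v) ⟨{v}, singleton_mem_chainsTo P v⟩ _

lemma sum_phi_le (P : PartialOrder V) {f : V → ℕ}
    (hf : ∀ a b, P.le a b → f a ≤ f b) :
    ∀ S : Finset V, pChain P S → ∀ v0, (∀ u ∈ S, P.le u v0) →
      ∑ u ∈ S, phi P f u ≤ f v0 := by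
  intro S
  induction S using Finset.strongInduction with
  | _ S ih =>
    intro hc v0 hb
    rcases S.eq_empty_or_nonempty with rfl | hne
    · simp
    obtain ⟨u0, hu0S, hu0max⟩ := chain_exists_max P _ hc hne
    have hsum : ∑ u ∈ S, phi P f u = phi P f u0 + ∑ u ∈ S.erase u0, phi P f u :=
      (Finset.add_sum_erase _ _ hu0S).symm
    have hc' : pChain P (S.erase u0) := fun a ha b hb' =>
      hc a (Finset.mem_of_mem_erase ha) b (Finset.mem_of_mem_erase hb')
    have hfu0 : f u0 ≤ f v0 := hf _ _ (hb _ hu0S)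
    have hphi0 : phi P f u0 = f u0 - Mx P f u0 := rfl
    have hMle : Mx P f u0 ≤ f u0 := Mx_le P hf u0
    rcases (S.erase u0).eq_empty_or_nonempty with h0 | hne'
    · rw [hsum, h0]
      simp only [Finset.sum_empty, add_zero]
      omega
    obtain ⟨u1, hu1, hmax1⟩ := chain_exists_max P _ hc' hne'
    have hu1S : u1 ∈ S := Finset.mem_of_mem_erase hu1
    have hlt : P.lt u1 u0 := plt_of_ple_ne P (hu0max _ hu1S) (Finset.ne_of_mem_erase hu1)
    have h1 : ∑ u ∈ S.erase u0, phi P f u ≤ f u1 :=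
      ih (S.erase u0) (Finset.erase_ssubset hu0S) hc' u1 hmax1
    have h2 : f u1 ≤ Mx P f u0 := le_Mx P f hlt
    rw [hsum]
    omega

lemma phi_chain_bound (P : PartialOrder V) {m : ℕ} {f : V → ℕ}
    (hf : ∀ a b, P.le a b → f a ≤ f b) (hbd : ∀ v, f v < m + 1)
    {S : Finset V} (hc : pChain P S) : ∑ u ∈ S, phi P f u ≤ m := by
  rcases S.eq_empty_or_nonempty with rfl | hne
  · simp
  obtain ⟨v0, hv0, hmax⟩ := chain_exists_max P _ hc hne
  have := sum_phi_le P hf S hc v0 hmax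
  have := hbd v0
  omega

lemma psi_le (P : PartialOrder V) {m : ℕ} {g : V → ℕ}
    (hg : ∀ S : Finset V, pChain P S → ∑ u ∈ S, g u ≤ m) (v : V) :
    psi P g v ≤ m := by
  refine Finset.sup_le ?_
  intro S hS
  rw [mem_chainsTo_iff] at hS
  exact hg S hS.2.1

lemma psi_mono (P : PartialOrder V) (g : V → ℕ) {a b : V} (hab : P.le a b) :
    psi P g a ≤ psi P g b := by
  rw [psi]
  refine Finset.sup_le ?_
  intro S hS
  rw [mem_chainsTo_iff] at hS
  obtain ⟨haS, hc, hbd⟩ := hS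
  have hbd' : ∀ u ∈ S, P.le u b := fun u hu => P.le_trans _ _ _ (hbd u hu) hab
  have hmem : insert b S ∈ chainsTo P b := by
    rw [mem_chainsTo_iff]
    refine ⟨Finset.mem_insert_self b S, pChain_insert P hc hbd', ?_⟩
    intro u hu
    rcases Finset.mem_insert.1 hu with rfl | hu
    · exact P.le_refl u
    · exact hbd' u hu
  calc ∑ u ∈ S, g u ≤ ∑ u ∈ insert b S, g u :=
        Finset.sum_le_sum_of_subset (Finset.subset_insert b S)
    _ ≤ psi P g b := le_psi_of_mem P g hmem

/-- The key recurrence for `psi`. -/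
lemma psi_eq (P : PartialOrder V) (g : V → ℕ) (v : V) :
    psi P g v = g v + Mx P (psi P g) v := by
  refine le_antisymm ?_ ?_
  · -- take a chain achieving the sup
    obtain ⟨S, hS, hEq⟩ := psi_attained P g v
    rw [hEq]
    rw [mem_chainsTo_iff] at hS
    obtain ⟨hvS, hc, hbd⟩ := hS
    have hsum : ∑ u ∈ S, g u = g v + ∑ u ∈ S.erase v, g u :=
      (Finset.add_sum_erase _ _ hvS).symm
    rcases (S.erase v).eq_empty_or_nonempty with h0 | hne'
    · rw [hsum, h0]
      simp
    have hc' : pChain P (S.erase v) := pChain_subset P (Finset.erase_subset v S) hc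
    obtain ⟨u0, hu0, hmax0⟩ := chain_exists_max P _ hc' hne'
    have hu0v : P.lt u0 v :=
      plt_of_ple_ne P (hbd _ (Finset.mem_of_mem_erase hu0)) (Finset.ne_of_mem_erase hu0)
    have hmem : S.erase v ∈ chainsTo P u0 := by
      rw [mem_chainsTo_iff]
      exact ⟨hu0, hc', hmax0⟩
    have h1 : ∑ u ∈ S.erase v, g u ≤ psi P g u0 := le_psi_of_mem P g hmem
    have h2 : psi P g u0 ≤ Mx P (psi P g) v := le_Mx P (psi P g) hu0v
    omega
  · -- lower bound
    have hbase : g v ≤ psi P g v := by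
      have := le_psi_of_mem P g (singleton_mem_chainsTo P v)
      simpa using this
    rcases (Finset.univ.filter (fun u => P.lt u v)).eq_empty_or_nonempty with h0 | hne
    · rw [Mx, h0]
      simpa using hbase
    obtain ⟨u, hu, hEq⟩ := Finset.exists_mem_eq_sup _ hne (psi P g)
    rw [Finset.mem_filter] at hu
    have huv : P.lt u v := hu.2
    rw [Mx, hEq]
    obtain ⟨S, hS, hSEq⟩ := psi_attained P g u
    rw [mem_chainsTo_iff] at hS
    obtain ⟨huS, hc, hbd⟩ := hS
    have hbd' : ∀ x ∈ S, P.le x v := fun x hx =>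
      P.le_trans _ _ _ (hbd x hx) (ple_of_plt P huv)
    have hvS : v ∉ S := by
      intro hv
      have : P.le v u := hbd v hv
      rw [P.lt_iff_le_not_ge] at huv
      exact huv.2 this
    have hmem : insert v S ∈ chainsTo P v := by
      rw [mem_chainsTo_iff]
      refine ⟨Finset.mem_insert_self v S, pChain_insert P hc hbd', ?_⟩
      intro x hx
      rcases Finset.mem_insert.1 hx with rfl | hx
      · exact P.le_refl x
      · exact hbd' x hx
    have h1 : ∑ x ∈ insert v S, g x ≤ psi P g v := le_psi_of_mem P g hmem
    rw [Finset.sum_insert hvS, ← hSEq] at h1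
    omega

lemma phi_psi (P : PartialOrder V) (g : V → ℕ) (v : V) :
    phi P (psi P g) v = g v := by
  have := psi_eq P g v
  unfold phi
  omega

lemma wf_plt (P : PartialOrder V) : WellFounded P.lt := by
  haveI : IsTrans V P.lt := ⟨fun a b c hab hbc => by
    rw [P.lt_iff_le_not_ge] at *
    exact ⟨P.le_trans _ _ _ hab.1 hbc.1, fun h => hab.2 (P.le_trans _ _ _ hbc.1 h)⟩⟩
  haveI : IsIrrefl V P.lt := ⟨fun a ha => by
    rw [P.lt_iff_le_not_ge] at ha
    exact ha.2 ha.1⟩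
  exact Finite.wellFounded_of_trans_of_irrefl P.lt

lemma psi_phi (P : PartialOrder V) {f : V → ℕ}
    (hf : ∀ a b, P.le a b → f a ≤ f b) (v : V) :
    psi P (phi P f) v = f v := by
  induction v using (wf_plt P).induction with
  | _ v ih =>
    have h1 : psi P (phi P f) v = phi P f v + Mx P (psi P (phi P f)) v := psi_eq P _ v
    have h2 : Mx P (psi P (phi P f)) v = Mx P f v := by
      unfold Mx
      refine Finset.sup_congr rfl ?_
      intro u hu
      rw [Finset.mem_filter] at hu
      exact ih u hu.2
    have h3 : Mx P f v ≤ f v := Mx_le P hf v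
    rw [h1, h2]
    unfold phi
    omega

/-- Transfer equivalence: order-preserving maps bounded by `m` correspond to
chain-bounded functions. -/
noncomputable def transferEquiv (P : PartialOrder V) (m : ℕ) :
    {f : V → ℕ // (∀ a b, P.le a b → f a ≤ f b) ∧ ∀ v, f v < m + 1} ≃
    {g : V → ℕ // ∀ S : Finset V, pChain P S → ∑ u ∈ S, g u ≤ m} where
  toFun := fun ⟨f, hf, hbd⟩ => ⟨phi P f, fun S hS => phi_chain_bound P hf hbd hS⟩
  invFun := fun ⟨g, hg⟩ => ⟨psi P g,
    fun a b hab => psi_mono P g hab,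
    fun v => Nat.lt_succ_of_le (psi_le P hg v)⟩
  left_inv := fun ⟨f, hf, hbd⟩ => Subtype.ext (funext fun v => psi_phi P hf v)
  right_inv := fun ⟨g, hg⟩ => Subtype.ext (funext fun v => phi_psi P g v)

/-- Number of weakly order-preserving maps `V → Fin m`. -/
noncomputable def Wcard (P : PartialOrder V) (m : ℕ) : ℕ :=
  Nat.card {f : V → Fin m // ∀ a b, P.le a b → f a ≤ f b}

/-- Number of weakly order-preserving surjections `V → Fin k`. -/
noncomputable def Tcard (P : PartialOrder V) (k : ℕ) : ℕ :=
  Nat.card {f : V → Fin k // (∀ a b, P.le a b → f a ≤ f b) ∧ Function.Surjective f}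

lemma Wcard_eq_nat (P : PartialOrder V) (m : ℕ) :
    Wcard P m = Nat.card {f : V → ℕ // (∀ a b, P.le a b → f a ≤ f b) ∧ ∀ v, f v < m} := by
  refine Nat.card_congr ?_
  refine
    { toFun := fun ⟨f, hf⟩ => ⟨fun v => (f v : ℕ),
        fun a b hab => by exact_mod_cast hf a b hab, fun v => (f v).isLt⟩
      invFun := fun ⟨f, hf, hbd⟩ => ⟨fun v => ⟨f v, hbd v⟩,
        fun a b hab => by simpa [Fin.le_def] using hf a b hab⟩
      left_inv := fun ⟨f, hf⟩ => Subtype.ext (funext fun v => by simp)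
      right_inv := fun ⟨f, hf, hbd⟩ => Subtype.ext (funext fun v => rfl) }

end Invariance

section Main

variable {V : Type*} [Fintype V]

/-- Chain-bounded counts only depend on the comparability relation. -/
lemma Kcard_eq (P Q : PartialOrder V) (σ : V ≃ V)
    (hiso : ∀ u v, (P.le u v ∨ P.le v u) ↔ (Q.le (σ u) (σ v) ∨ Q.le (σ v) (σ u)))
    (m : ℕ) :
    Nat.card {g : V → ℕ // ∀ S : Finset V, pChain P S → ∑ u ∈ S, g u ≤ m} =
    Nat.card {g : V → ℕ // ∀ S : Finset V, pChain Q S → ∑ u ∈ S, g u ≤ m} := by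
  refine Nat.card_congr ?_
  refine
    { toFun := fun ⟨g, hg⟩ => ⟨fun v => g (σ.symm v), ?_⟩
      invFun := fun ⟨g, hg⟩ => ⟨fun v => g (σ v), ?_⟩
      left_inv := fun ⟨g, hg⟩ => Subtype.ext (funext fun v => by simp)
      right_inv := fun ⟨g, hg⟩ => Subtype.ext (funext fun v => by simp) }
  · -- forward: S is a Q-chain
    intro S hS
    have hinj : ∀ x ∈ S, ∀ y ∈ S, σ.symm x = σ.symm y → x = y := fun x _ y _ h =>
      σ.symm.injective h
    show ∑ u ∈ S, g (σ.symm u) ≤ m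
    rw [← Finset.sum_image hinj]
    refine hg _ ?_
    intro a ha b hb
    rw [Finset.mem_image] at ha hb
    obtain ⟨x, hx, rfl⟩ := ha
    obtain ⟨y, hy, rfl⟩ := hb
    have := (hiso (σ.symm x) (σ.symm y)).mpr
    simp only [Equiv.apply_symm_apply] at this
    exact this (hS x hx y hy)
  · -- backward: S is a P-chain
    intro S hS
    have hinj : ∀ x ∈ S, ∀ y ∈ S, σ x = σ y → x = y := fun x _ y _ h => σ.injective h
    show ∑ u ∈ S, g (σ u) ≤ m
    rw [← Finset.sum_image hinj]
    refine hg _ ?_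
    intro a ha b hb
    rw [Finset.mem_image] at ha hb
    obtain ⟨x, hx, rfl⟩ := ha
    obtain ⟨y, hy, rfl⟩ := hb
    exact (hiso x y).mp (hS x hx y hy)

lemma Wcard_eq (P Q : PartialOrder V) (σ : V ≃ V)
    (hiso : ∀ u v, (P.le u v ∨ P.le v u) ↔ (Q.le (σ u) (σ v) ∨ Q.le (σ v) (σ u)))
    (m : ℕ) : Wcard P m = Wcard Q m := by
  cases m with
  | zero =>
    refine Nat.card_congr ?_
    exact
      { toFun := fun ⟨f, hf⟩ => ⟨f, fun a b _ => (f a).elim0⟩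
        invFun := fun ⟨f, hf⟩ => ⟨f, fun a b _ => (f a).elim0⟩
        left_inv := fun ⟨f, hf⟩ => rfl
        right_inv := fun ⟨f, hf⟩ => rfl }
  | succ m =>
    rw [Wcard_eq_nat, Wcard_eq_nat,
      Nat.card_congr (transferEquiv P m), Nat.card_congr (transferEquiv Q m)]
    exact Kcard_eq P Q σ hiso m

lemma nat_card_sigma {ι : Type*} [Fintype ι] (A : ι → Type*) [∀ i, Finite (A i)] :
    Nat.card (Σ i, A i) = ∑ i, Nat.card (A i) := by
  letI : ∀ i, Fintype (A i) := fun i => Fintype.ofFinite _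
  simp only [Nat.card_eq_fintype_card]
  exact Fintype.card_sigma

/-- Splitting order-preserving maps by their image. -/
noncomputable def imgSigmaEquiv (P : PartialOrder V) (m : ℕ) :
    {f : V → Fin m // ∀ a b, P.le a b → f a ≤ f b} ≃
    Σ S : Finset (Fin m),
      {f : V → Fin m // (∀ a b, P.le a b → f a ≤ f b) ∧ Finset.image f Finset.univ = S} where
  toFun f := ⟨Finset.image f.1 Finset.univ, f.1, f.2, rfl⟩
  invFun p := ⟨p.2.1, p.2.2.1⟩
  left_inv f := rfl
  right_inv p := by
    rcases p with ⟨S, f, hf, rfl⟩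
    rfl

/-- Maps with image `S` correspond to surjections onto `Fin S.card`. -/
noncomputable def fiberEquiv (P : PartialOrder V) {m : ℕ} (S : Finset (Fin m)) :
    {f : V → Fin m // (∀ a b, P.le a b → f a ≤ f b) ∧ Finset.image f Finset.univ = S} ≃
    {g : V → Fin S.card // (∀ a b, P.le a b → g a ≤ g b) ∧ Function.Surjective g} where
  toFun := fun ⟨f, hf, hS⟩ => ⟨fun v => (S.orderIsoOfFin rfl).symm
      ⟨f v, by rw [← hS]; exact Finset.mem_image_of_mem f (Finset.mem_univ v)⟩,
    by
      intro a b hab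
      exact (S.orderIsoOfFin rfl).symm.monotone (Subtype.mk_le_mk.mpr (hf a b hab)),
    by
      intro i
      have hx : ((S.orderIsoOfFin rfl) i : Fin m) ∈ Finset.image f Finset.univ := by
        rw [hS]; exact ((S.orderIsoOfFin rfl) i).2
      rw [Finset.mem_image] at hx
      obtain ⟨v, -, hv⟩ := hx
      refine ⟨v, ?_⟩
      show (S.orderIsoOfFin rfl).symm _ = i
      rw [OrderIso.symm_apply_eq]
      exact Subtype.ext hv⟩
  invFun := fun ⟨g, hg, hsurj⟩ => ⟨fun v => ((S.orderIsoOfFin rfl) (g v) : Fin m),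
    by
      intro a b hab
      exact Subtype.coe_le_coe.mpr ((S.orderIsoOfFin rfl).monotone (hg a b hab)),
    by
      ext x
      simp only [Finset.mem_image, Finset.mem_univ, true_and]
      constructor
      · rintro ⟨v, rfl⟩
        exact ((S.orderIsoOfFin rfl) (g v)).2
      · intro hx
        obtain ⟨v, hv⟩ := hsurj ((S.orderIsoOfFin rfl).symm ⟨x, hx⟩)
        refine ⟨v, ?_⟩
        rw [hv, OrderIso.apply_symm_apply]⟩
  left_inv := by
    rintro ⟨f, hf, hS⟩
    refine Subtype.ext (funext fun v => ?_)
    show ((S.orderIsoOfFin rfl) ((S.orderIsoOfFin rfl).symm _) : Fin m) = f v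
    rw [OrderIso.apply_symm_apply]
  right_inv := by
    rintro ⟨g, hg, hsurj⟩
    refine Subtype.ext (funext fun v => ?_)
    show (S.orderIsoOfFin rfl).symm _ = g v
    rw [OrderIso.symm_apply_eq]

/-- Decomposition of weakly order-preserving maps by image. -/
lemma Wcard_decomp (P : PartialOrder V) (m : ℕ) :
    Wcard P m = ∑ S : Finset (Fin m), Tcard P S.card := by
  classical
  have e : {f : V → Fin m // ∀ a b, P.le a b → f a ≤ f b} ≃
      Σ S : Finset (Fin m),
        {g : V → Fin S.card // (∀ a b, P.le a b → g a ≤ g b) ∧ Function.Surjective g} :=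
    (imgSigmaEquiv P m).trans (Equiv.sigmaCongrRight fun S => fiberEquiv P S)
  rw [Wcard, Nat.card_congr e, nat_card_sigma]
  rfl

lemma Tcard_eq (P Q : PartialOrder V) (σ : V ≃ V)
    (hiso : ∀ u v, (P.le u v ∨ P.le v u) ↔ (Q.le (σ u) (σ v) ∨ Q.le (σ v) (σ u))) :
    ∀ k, Tcard P k = Tcard Q k := by
  intro k
  induction k using Nat.strong_induction_on with
  | _ k ih =>
    have hW := Wcard_eq P Q σ hiso k
    rw [Wcard_decomp, Wcard_decomp] at hW
    have huniv : (Finset.univ : Finset (Fin k)).card = k := by simp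
    have hsplit : ∀ R : PartialOrder V,
        ∑ S : Finset (Fin k), Tcard R S.card =
        Tcard R k + ∑ S ∈ (Finset.univ : Finset (Finset (Fin k))).erase Finset.univ,
          Tcard R S.card := by
      intro R
      rw [← Finset.add_sum_erase _ _ (Finset.mem_univ (Finset.univ : Finset (Fin k))), huniv]
    rw [hsplit P, hsplit Q] at hW
    have hrest : ∑ S ∈ (Finset.univ : Finset (Finset (Fin k))).erase Finset.univ,
        Tcard P S.card =
        ∑ S ∈ (Finset.univ : Finset (Finset (Fin k))).erase Finset.univ,
          Tcard Q S.card := by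
      refine Finset.sum_congr rfl ?_
      intro S hS
      have hne : S ≠ Finset.univ := Finset.ne_of_mem_erase hS
      have hlt : S.card < k := by
        have := Finset.card_lt_card (Finset.ssubset_univ_iff.mpr hne)
        simpa [huniv] using this
      exact ih S.card hlt
    omega

lemma eCount_eq_Tcard (P : PartialOrder V) :
    eCount V P = Tcard P (Fintype.card V) := by
  refine Nat.card_congr ?_
  have hbij : ∀ f : V → Fin (Fintype.card V), Function.Surjective f → Function.Bijective f := by
    intro f hf
    rw [Fintype.bijective_iff_surjective_and_card]
    exact ⟨hf, by simp⟩
  refine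
    { toFun := fun ⟨e, he⟩ => ⟨e, ?_, e.surjective⟩
      invFun := fun ⟨f, hf, hsurj⟩ => ⟨Equiv.ofBijective f (hbij f hsurj), ?_⟩
      left_inv := ?_
      right_inv := ?_ }
  · intro a b hab
    by_cases h : a = b
    · subst h; exact le_refl _
    · exact le_of_lt (he a b (plt_of_ple_ne P hab h))
  · intro a b hab
    have h1 : f a ≤ f b := hf a b (ple_of_plt P hab)
    have h2 : f a ≠ f b := fun h => pne_of_plt P hab ((hbij f hsurj).1 h)
    exact lt_of_le_of_ne h1 h2
  · rintro ⟨e, he⟩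
    refine Subtype.ext (Equiv.ext fun v => rfl)
  · rintro ⟨f, hf, hsurj⟩
    exact Subtype.ext rfl

end Main

theorem stmt_7 {V : Type*} [Fintype V] (P Q : PartialOrder V) (σ : V ≃ V)
    (hiso : ∀ u v, (P.le u v ∨ P.le v u) ↔ (Q.le (σ u) (σ v) ∨ Q.le (σ v) (σ u))) :
    eCount V P = eCount V Q := by
  rw [eCount_eq_Tcard P, eCount_eq_Tcard Q]
  exact Tcard_eq P Q σ hiso (Fintype.card V)
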